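/- In the r-subdivision of K_n, for distinct branch vertices v, a, b and c an internal vertex in the middle of the subdivided edge between a and b (the one at distance ⌈(r+1)/2⌉ from a), every path of length at most r + 1 + ⌈r/2⌉ from v to c is contained in the union of the subdivided edges (v,a), (v,b), and (a,b). -/

import Mathlib

/-- Edges of `K_n`, as ordered pairs. -/
abbrev EdgeKn (n : ℕ) := {p : Fin n × Fin n // p.1 < p.2}

/-- Vertices of the `r`-subdivision of `K_n`: branch vertices plus `r` internal
vertices on each edge. -/
abbrev SubVert (n r : ℕ) := Fin n ⊕ (EdgeKn n × Fin r)

/-- Adjacency of the `r`-subdivision of `K_n`: internal vertex `(e, i)` lies at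
distance `i + 1` from `e.1.1` along the subdivided edge `e`. -/
def subAdj (n r : ℕ) : SubVert n r → SubVert n r → Prop
  | Sum.inl u, Sum.inl v => r = 0 ∧ u ≠ v
  | Sum.inl u, Sum.inr (e, i) => (u = e.1.1 ∧ (i : ℕ) = 0) ∨ (u = e.1.2 ∧ (i : ℕ) = r - 1)
  | Sum.inr (e, i), Sum.inl u => (u = e.1.1 ∧ (i : ℕ) = 0) ∨ (u = e.1.2 ∧ (i : ℕ) = r - 1)
  | Sum.inr (e, i), Sum.inr (e', j) => e = e' ∧ ((i : ℕ) + 1 = j ∨ (j : ℕ) + 1 = i)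

/-- The `r`-subdivision of the complete graph `K_n`. -/
def subdivK (n r : ℕ) : SimpleGraph (SubVert n r) where
  Adj := subAdj n r
  symm := by
    constructor
    rintro (u | ⟨e, i⟩) (v | ⟨e', j⟩) h <;> simp only [subAdj] at h ⊢ <;> tauto
  loopless := by
    constructor
    rintro (u | ⟨e, i⟩) h <;> simp only [subAdj] at h
    · exact h.2 rfl
    · rcases h with ⟨-, h | h⟩ <;> omega

/-- The set of vertices of the subdivided edge joining branch vertices `x` and `y`. -/
def subEdgeSet (n r : ℕ) (x y : Fin n) : Set (SubVert n r) :=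
  {z | z = Sum.inl x ∨ z = Sum.inl y ∨
    ∃ (e : EdgeKn n) (i : Fin r), z = Sum.inr (e, i) ∧
      ((e.1.1 = x ∧ e.1.2 = y) ∨ (e.1.1 = y ∧ e.1.2 = x))}


open SimpleGraph Walk

/-- symmetry of subEdgeSet membership -/
lemma mem_subEdgeSet_symm' {n r : ℕ} {x y : Fin n} {z : SubVert n r}
    (h : z ∈ subEdgeSet n r x y) : z ∈ subEdgeSet n r y x := by
  simp only [subEdgeSet, Set.mem_setOf_eq] at h ⊢
  rcases h with h | h | ⟨e, i, hz, h⟩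
  · exact Or.inr (Or.inl h)
  · exact Or.inl h
  · exact Or.inr (Or.inr ⟨e, i, hz, h.symm⟩)

/-- Tail decomposition: a walk from an internal vertex of edge `e` to a branch vertex
splits as a walk inside edge `e` to one of its endpoints, followed by the rest. -/
lemma lemT' {n r : ℕ} (e : EdgeKn n) :
    ∀ {s t : SubVert n r} (w : (subdivK n r).Walk s t) (i : Fin r),
      s = Sum.inr (e, i) → ∀ u0 : Fin n, t = Sum.inl u0 →
      ∃ (x : Fin n) (w1 : (subdivK n r).Walk s (Sum.inl x))
        (w2 : (subdivK n r).Walk (Sum.inl x) t),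
        (x = e.1.1 ∨ x = e.1.2) ∧ w = w1.append w2 ∧
        (∀ z ∈ w1.support, z ∈ subEdgeSet n r e.1.1 e.1.2) ∧
        (x = e.1.1 → (i : ℕ) + 1 ≤ w1.length) ∧
        (x = e.1.2 → r - (i : ℕ) ≤ w1.length) := by
  intro s t w
  induction w with
  | nil =>
    rintro i rfl u0 h
    exact absurd h (by simp)
  | @cons s y t h p ih =>
    rintro i rfl u0 rfl
    obtain (x | ⟨e'', j⟩) := y
    · -- next vertex is a branch vertex x
      have hx : (x = e.1.1 ∧ (i : ℕ) = 0) ∨ (x = e.1.2 ∧ (i : ℕ) = r - 1) := h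
      refine ⟨x, Walk.cons h Walk.nil, p, ?_, by simp, ?_, ?_, ?_⟩
      · tauto
      · intro z hz
        simp only [support_cons, support_nil, List.mem_cons, List.mem_singleton] at hz
        rcases hz with rfl | rfl | h'
        · exact Or.inr (Or.inr ⟨e, i, rfl, Or.inl ⟨rfl, rfl⟩⟩)
        · rcases hx with ⟨rfl, -⟩ | ⟨rfl, -⟩
          · exact Or.inl rfl
          · exact Or.inr (Or.inl rfl)
        · exact absurd h' (by simp)
      · intro hxe
        rcases hx with ⟨-, hi⟩ | ⟨hx2, -⟩
        · simp [hi]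
        · exact absurd (hxe ▸ hx2) (by have := e.2; intro hh; rw [hh] at this; exact lt_irrefl _ this)
      · intro hxe
        have hr : 1 ≤ r := i.pos
        rcases hx with ⟨hx1, -⟩ | ⟨-, hi⟩
        · exact absurd (hxe ▸ hx1) (by have := e.2; intro hh; rw [← hh] at this; exact lt_irrefl _ this)
        · simp only [length_cons, length_nil]
          omega
    · -- next vertex is internal
      have hadj : e = e'' ∧ ((i : ℕ) + 1 = j ∨ (j : ℕ) + 1 = i) := h
      obtain ⟨rfl, hij⟩ := hadj
      obtain ⟨x, w1, w2, hx, heq, hsup, hb1, hb2⟩ := ih j rfl u0 rfl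
      refine ⟨x, Walk.cons h w1, w2, hx, by rw [heq, Walk.cons_append], ?_, ?_, ?_⟩
      · intro z hz
        simp only [support_cons, List.mem_cons] at hz
        rcases hz with rfl | hz
        · exact Or.inr (Or.inr ⟨e, i, rfl, Or.inl ⟨rfl, rfl⟩⟩)
        · exact hsup z hz
      · intro hxe
        have := hb1 hxe
        simp only [length_cons]
        omega
      · intro hxe
        have := hb2 hxe
        simp only [length_cons]
        omega

/-- Any path of length ≤ 2r+1 between distinct branch vertices has length ≥ r+1 and
lies inside the subdivided edge joining them. -/
lemma lemA' {n r : ℕ} (hr : 1 ≤ r) :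
    ∀ (L : ℕ) (u u' : Fin n) (w : (subdivK n r).Walk (Sum.inl u) (Sum.inl u')),
      w.length ≤ L → u ≠ u' → w.IsPath → w.length ≤ 2 * r + 1 →
      r + 1 ≤ w.length ∧ ∀ z ∈ w.support, z ∈ subEdgeSet n r u u' := by
  intro L
  induction L with
  | zero =>
    intro u u' w hL hne _ _
    have := Walk.eq_of_length_eq_zero (Nat.le_zero.mp hL)
    exact absurd (Sum.inl.inj this) hne
  | succ L ihL =>
    intro u u' w hL hne hw hlen
    cases w with
    | nil => exact absurd rfl hne
    | @cons _ y _ h p =>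
      obtain (x0 | ⟨e', j⟩) := y
      · have h' : r = 0 ∧ u ≠ x0 := h
        omega
      · have hy : (u = e'.1.1 ∧ (j : ℕ) = 0) ∨ (u = e'.1.2 ∧ (j : ℕ) = r - 1) := h
        obtain ⟨x, w1, w2, hx, heq, hsup, hb1, hb2⟩ := lemT' e' p j rfl u' rfl
        rw [Walk.cons_isPath_iff] at hw
        obtain ⟨hp, hmem⟩ := hw
        -- x ≠ u
        have hxu : x ≠ u := by
          rintro rfl
          exact hmem (heq ▸ (Walk.mem_support_append_iff w1 w2).mpr (Or.inl w1.end_mem_support))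
        -- e'.1.1 ≠ e'.1.2
        have hee : e'.1.1 ≠ e'.1.2 := ne_of_lt e'.2
        have hkey : r ≤ w1.length ∧
            ((x = e'.1.1 ∧ u = e'.1.2) ∨ (x = e'.1.2 ∧ u = e'.1.1)) := by
          rcases hy with ⟨rfl, hj⟩ | ⟨rfl, hj⟩ <;> rcases hx with rfl | rfl
          · exact absurd rfl hxu
          · have := hb2 rfl; exact ⟨by omega, Or.inr ⟨rfl, rfl⟩⟩
          · have := hb1 rfl; exact ⟨by omega, Or.inl ⟨rfl, rfl⟩⟩
          · exact absurd rfl hxu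
        obtain ⟨hw1len, hxe⟩ := hkey
        have hplen : p.length = w1.length + w2.length := by rw [heq, Walk.length_append]
        have hwlen : (Walk.cons h p).length = p.length + 1 := rfl
        have hw2path : w2.IsPath := (heq ▸ hp).of_append_right
        -- x = u'
        have hxu' : x = u' := by
          by_contra hxu'
          have := ihL x u' w2 (by omega) hxu' hw2path (by omega)
          omega
        subst hxu'
        have hw2nil : w2 = Walk.nil := Walk.isPath_iff_eq_nil.mp hw2path
        subst hw2nil
        constructor
        · simp only [hwlen]; omega
        · intro z hz
          simp only [Walk.support_cons, List.mem_cons] at hz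
          rcases hz with rfl | hz
          · exact Or.inl rfl
          · rw [heq] at hz
            rcases (Walk.mem_support_append_iff w1 _).mp hz with hz1 | hz2
            · have := hsup z hz1
              rcases hxe with ⟨h1, h2⟩ | ⟨h1, h2⟩
              · rw [← h1, ← h2] at this
                exact mem_subEdgeSet_symm' this
              · rw [← h1, ← h2] at this
                exact this
            · simp only [Walk.support_nil, List.mem_singleton] at hz2
              exact hz2 ▸ Or.inr (Or.inl rfl)


/-- Every path of length at most `r + 1 + ⌈r/2⌉` from a branch vertex `v` to the middle
vertex `c` of the subdivided edge `ab` (the internal vertex at distance `⌈(r+1)/2⌉` from `a`)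
is contained in the union of the subdivided edges `(v,a)`, `(v,b)` and `(a,b)`. -/
theorem subdivK_path_local (n r : ℕ) (hn : 3 ≤ n) (v a b : Fin n)
    (hva : v ≠ a) (hvb : v ≠ b) (hab : a ≠ b)
    (e : EdgeKn n) (he : (e.1.1 = a ∧ e.1.2 = b) ∨ (e.1.1 = b ∧ e.1.2 = a)) (i : Fin r)
    (hc : (subdivK n r).edist (Sum.inl a) (Sum.inr (e, i)) = (((r + 2) / 2 : ℕ) : ℕ∞))
    (w : (subdivK n r).Walk (Sum.inl v) (Sum.inr (e, i))) (hw : w.IsPath)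
    (hlen : w.length ≤ r + 1 + (r + 1) / 2) :
    ∀ z ∈ w.support,
      z ∈ subEdgeSet n r v a ∪ subEdgeSet n r v b ∪ subEdgeSet n r a b := by
  have hr : 1 ≤ r := i.pos
  obtain ⟨x, w1, w2, hx, heq, hsup, -, -⟩ := lemT' e w.reverse i rfl v rfl
  have hrl : w.reverse.length = w.length := Walk.length_reverse w
  have hlensplit : w.reverse.length = w1.length + w2.length := by
    rw [heq, Walk.length_append]
  have hxab : x = a ∨ x = b := by rcases he with ⟨h1, h2⟩ | ⟨h1, h2⟩ <;> rcases hx with rfl | rfl <;> tauto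
  have hxv : x ≠ v := by rintro rfl; rcases hxab with rfl | rfl; exacts [hva rfl, hvb rfl]
  have hw2path : w2.IsPath := (heq ▸ hw.reverse).of_append_right
  have hw2len : w2.length ≤ 2 * r + 1 := by omega
  have hA := lemA' hr w2.length x v w2 le_rfl hxv hw2path hw2len
  intro z hz
  have hz' : z ∈ w.reverse.support := by
    rw [Walk.support_reverse, List.mem_reverse]; exact hz
  rw [heq] at hz'
  rcases (Walk.mem_support_append_iff w1 w2).mp hz' with hz1 | hz2
  · -- inside edge e : subEdgeSet a b
    have := hsup z hz1
    refine Or.inr ?_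
    rcases he with ⟨h1, h2⟩ | ⟨h1, h2⟩
    · rw [h1, h2] at this; exact this
    · rw [h1, h2] at this; exact mem_subEdgeSet_symm' this
  · have := mem_subEdgeSet_symm' (hA.2 z hz2)
    rcases hxab with rfl | rfl
    · exact Or.inl (Or.inl this)
    · exact Or.inl (Or.inr this)
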